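/- Let Φ and Ψ be frames in H and U ∈ B(H). Then U is compact if and only if G_{U,Φ,Ψ} = T_Φ* U T_Ψ is compact on ℓ². -/

import Mathlib

open ContinuousLinearMap

noncomputable section

/-- ℓ² over a countable index set. -/
abbrev L2 : Type := lp (fun _ : ℕ => ℂ) 2

open scoped InnerProductSpace in
/-- The frame operator `S = T ∘ T*` of a frame is bijective. -/
private lemma frame_S_inv {H : Type} [NormedAddCommGroup H] [InnerProductSpace ℂ H]
    [CompleteSpace H] (T : L2 →L[ℂ] H) (A : ℝ) (hA : 0 < A)
    (hlow : ∀ f : H, A * ‖f‖ ^ 2 ≤ ‖adjoint T f‖ ^ 2) :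
    ∃ Sinv : H →L[ℂ] H,
      (∀ f, Sinv (T (adjoint T f)) = f) ∧ (∀ f, T (adjoint T (Sinv f)) = f) := by
  set S : H →L[ℂ] H := T ∘L adjoint T with hS
  have hinner : ∀ f : H, ‖adjoint T f‖ ^ 2 = RCLike.re (⟪S f, f⟫_ℂ) := by
    intro f
    have : ⟪S f, f⟫_ℂ = ⟪adjoint T f, adjoint T f⟫_ℂ := by
      rw [hS, ContinuousLinearMap.comp_apply, ← ContinuousLinearMap.adjoint_inner_right]
    rw [this, ← @inner_self_eq_norm_sq ℂ]
  -- S is bounded below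
  have hbelow : ∀ f : H, A * ‖f‖ ≤ ‖S f‖ := by
    intro f
    rcases eq_or_ne f 0 with rfl | hf
    · simp
    have h1 : A * ‖f‖ ^ 2 ≤ ‖S f‖ * ‖f‖ := by
      calc A * ‖f‖ ^ 2 ≤ ‖adjoint T f‖ ^ 2 := hlow f
        _ = RCLike.re (⟪S f, f⟫_ℂ) := hinner f
        _ ≤ ‖⟪S f, f⟫_ℂ‖ := RCLike.re_le_norm _
        _ ≤ ‖S f‖ * ‖f‖ := norm_inner_le_norm _ _
    have hfpos : 0 < ‖f‖ := norm_pos_iff.mpr hf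
    have := (mul_le_mul_iff_of_pos_right hfpos).mp (by nlinarith : (A * ‖f‖) * ‖f‖ ≤ ‖S f‖ * ‖f‖)
    exact this
  have hker : LinearMap.ker (S : H →ₗ[ℂ] H) = ⊥ := by
    rw [LinearMap.ker_eq_bot']
    intro f hf
    have := hbelow f
    rw [show S f = 0 from hf] at this
    simp only [norm_zero] at this
    have : ‖f‖ ≤ 0 := by nlinarith
    exact norm_le_zero_iff.mp this
  -- range of S is closed
  have hanti : AntilipschitzWith (⟨A, hA.le⟩ : NNReal)⁻¹ S := by
    apply ContinuousLinearMap.antilipschitz_of_bound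
    intro x
    have := hbelow x
    change ‖x‖ ≤ A⁻¹ * ‖S x‖
    rw [le_inv_mul_iff₀ hA]
    exact this
  have hclosed : IsClosed (Set.range S) :=
    (hanti.isClosedEmbedding S.uniformContinuous).isClosed_range
  -- range of S is all of H
  have hrange : LinearMap.range (S : H →ₗ[ℂ] H) = ⊤ := by
    haveI : CompleteSpace (LinearMap.range (S : H →ₗ[ℂ] H)) := by
      have h2 : IsClosed ((LinearMap.range (S : H →ₗ[ℂ] H) : Submodule ℂ H) : Set H) := by
        have : ((LinearMap.range (S : H →ₗ[ℂ] H) : Submodule ℂ H) : Set H) = Set.range S := by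
          ext x; simp [LinearMap.mem_range]
        rw [this]; exact hclosed
      exact h2.completeSpace_coe
    rw [← Submodule.orthogonal_eq_bot_iff]
    rw [Submodule.eq_bot_iff]
    intro v hv
    have h0 : ⟪S v, v⟫_ℂ = 0 := hv (S v) (LinearMap.mem_range_self _ v)
    have h1 : A * ‖v‖ ^ 2 ≤ 0 := by
      calc A * ‖v‖ ^ 2 ≤ ‖adjoint T v‖ ^ 2 := hlow v
        _ = RCLike.re (⟪S v, v⟫_ℂ) := hinner v
        _ = 0 := by rw [h0]; simp
    have : ‖v‖ ^ 2 ≤ 0 := by nlinarith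
    have : ‖v‖ = 0 := by nlinarith [sq_nonneg ‖v‖, norm_nonneg v]
    exact norm_eq_zero.mp this
  let e := ContinuousLinearEquiv.ofBijective S hker hrange
  refine ⟨(e.symm : H →L[ℂ] H), ?_, ?_⟩
  · intro f
    exact e.symm_apply_apply f
  · intro f
    exact e.apply_symm_apply f

/-- for frames `Φ, Ψ` in `H` and `U` bounded, `U` is compact iff
`G_{U,Φ,Ψ} = TΦ* U TΨ` is compact on ℓ². -/
theorem stmt_8
    {H : Type} [NormedAddCommGroup H] [InnerProductSpace ℂ H] [CompleteSpace H]
    (Φ Ψ : ℕ → H) (AΦ AΨ : ℝ) (hAΦ : 0 < AΦ) (hAΨ : 0 < AΨ)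
    (TΦ TΨ : L2 →L[ℂ] H)
    (hΦ : ∀ i, TΦ (lp.single 2 i 1) = Φ i)
    (hΨ : ∀ i, TΨ (lp.single 2 i 1) = Ψ i)
    (hlowΦ : ∀ f : H, AΦ * ‖f‖ ^ 2 ≤ ‖adjoint TΦ f‖ ^ 2)
    (hlowΨ : ∀ f : H, AΨ * ‖f‖ ^ 2 ≤ ‖adjoint TΨ f‖ ^ 2)
    (U : H →L[ℂ] H) :
    IsCompactOperator ⇑U ↔ IsCompactOperator ⇑(adjoint TΦ ∘L U ∘L TΨ) := by
  constructor
  · intro hU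
    exact ((hU.comp_clm TΨ).clm_comp (adjoint TΦ))
  · intro hG
    obtain ⟨SΦinv, hSΦ1, _⟩ := frame_S_inv TΦ AΦ hAΦ hlowΦ
    obtain ⟨SΨinv, _, hSΨ2⟩ := frame_S_inv TΨ AΨ hAΨ hlowΨ
    have key : ∀ f : H,
        U f = (SΦinv ∘L TΦ) ((adjoint TΦ ∘L U ∘L TΨ) ((adjoint TΨ ∘L SΨinv) f)) := by
      intro f
      simp only [ContinuousLinearMap.comp_apply]
      rw [hSΨ2 f, hSΦ1 (U f)]
    have : ⇑U = (SΦinv ∘L TΦ) ∘ ⇑(adjoint TΦ ∘L U ∘L TΨ) ∘ (adjoint TΨ ∘L SΨinv) := by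
      funext f
      exact key f
    rw [this]
    exact (hG.comp_clm (adjoint TΨ ∘L SΨinv)).clm_comp (SΦinv ∘L TΦ)
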